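/- If G is a finite non-cyclic group acting on a relation module R/[R,R] arising from a free presentation 1 → R → F → G → 1 with F free of finite rank at least 2, then the action of G on R/[R,R] is faithful. More precisely: for each nontrivial x in G, letting C be the cyclic subgroup generated by x, the restriction of R/[R,R] to C contains a free ZC-summand, so x acts nontrivially. -/

import Mathlib

open MonoidAlgebra Multiplicative Function

namespace RelModFaithful

variable {G : Type*} [Group G] {d : ℕ}

abbrev AA (G : Type*) [Group G] : Type _ := MonoidAlgebra (ZMod 2) G
abbrev VV (G : Type*) [Group G] (d : ℕ) : Type _ := Fin d → AA G

noncomputable def actFun (g : G) (v : VV G d) : VV G d := fun i => of (ZMod 2) G g * v i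

lemma actFun_one (v : VV G d) : actFun (1 : G) v = v := by
  funext i; simp [actFun, ← MonoidAlgebra.one_def]

lemma actFun_mul (g h : G) (v : VV G d) : actFun (g * h) v = actFun g (actFun h v) := by
  funext i; simp [actFun, ← mul_assoc, MonoidAlgebra.single_mul_single]

lemma actFun_add (g : G) (v w : VV G d) : actFun g (v + w) = actFun g v + actFun g w := by
  funext i; simp [actFun, mul_add]

noncomputable def actHom : G →* MulAut (Multiplicative (VV G d)) where
  toFun g :=
    { toFun := fun v => ofAdd (actFun g (toAdd v))
      invFun := fun v => ofAdd (actFun g⁻¹ (toAdd v))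
      left_inv := fun v => by
        simp [← actFun_mul, actFun_one]
      right_inv := fun v => by
        simp [← actFun_mul, actFun_one]
      map_mul' := fun v w => by
        simp [actFun_add] }
  map_one' := by
    ext v
    simp [actFun_one]
  map_mul' g h := by
    ext v
    simp [actFun_mul]

@[simp] lemma actHom_apply (g : G) (v : Multiplicative (VV G d)) :
    actHom g v = ofAdd (actFun g (toAdd v)) := rfl

variable (φ : FreeGroup (Fin d) →* G)

noncomputable def psi : FreeGroup (Fin d) →* Multiplicative (VV G d) ⋊[actHom] G :=
  FreeGroup.lift fun i => ⟨ofAdd (Pi.single i 1), φ (FreeGroup.of i)⟩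

@[simp] lemma psi_of (i : Fin d) :
    psi φ (FreeGroup.of i) = ⟨ofAdd (Pi.single i 1), φ (FreeGroup.of i)⟩ :=
  FreeGroup.lift_apply_of

@[simp] lemma psi_right (f : FreeGroup (Fin d)) : (psi φ f).right = φ f := by
  have h : SemidirectProduct.rightHom.comp (psi φ) = φ :=
    FreeGroup.ext_hom _ _ fun i => by
      simp [SemidirectProduct.rightHom]
  exact DFunLike.congr_fun h f


/-- The set of left components of `ψ(R)`. -/
def Pset : Set (VV G d) := {v | ∃ r ∈ φ.ker, (psi φ r).left = ofAdd v}

lemma zero_mem_Pset : (0 : VV G d) ∈ Pset φ :=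
  ⟨1, one_mem _, by simp [map_one]⟩

lemma add_mem_Pset {v w : VV G d} (hv : v ∈ Pset φ) (hw : w ∈ Pset φ) : v + w ∈ Pset φ := by
  obtain ⟨r, hr, hrl⟩ := hv
  obtain ⟨s, hs, hsl⟩ := hw
  refine ⟨r * s, mul_mem hr hs, ?_⟩
  rw [map_mul, SemidirectProduct.mul_left, hrl, hsl, psi_right,
    MonoidHom.mem_ker.mp hr, map_one]
  simp [actFun_one, ← ofAdd_add]

lemma neg_mem_Pset {v : VV G d} (hv : v ∈ Pset φ) : -v ∈ Pset φ := by
  obtain ⟨r, hr, hrl⟩ := hv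
  refine ⟨r⁻¹, inv_mem hr, ?_⟩
  rw [map_inv, SemidirectProduct.inv_left, psi_right, MonoidHom.mem_ker.mp hr, hrl]
  simp [actFun_one]

/-- `Pset` as an additive subgroup. -/
noncomputable def PsetAdd : AddSubgroup (VV G d) where
  carrier := Pset φ
  zero_mem' := zero_mem_Pset φ
  add_mem' := add_mem_Pset φ
  neg_mem' := neg_mem_Pset φ

lemma conj_mem_Pset (hφ : Function.Surjective φ) (g : G) {v : VV G d} (hv : v ∈ Pset φ) :
    actFun g v ∈ Pset φ := by
  obtain ⟨r, hr, hrl⟩ := hv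
  obtain ⟨f, hf⟩ := hφ g
  refine ⟨f * r * f⁻¹, (MonoidHom.normal_ker φ).conj_mem r hr f, ?_⟩
  have hco : ∀ a b : Multiplicative (VV G d), a * b = b * a := fun a b => mul_comm a b
  rw [map_mul, map_mul, map_inv, SemidirectProduct.mul_left, SemidirectProduct.mul_left,
    SemidirectProduct.inv_left, SemidirectProduct.mul_right, psi_right, psi_right, hrl,
    MonoidHom.mem_ker.mp hr, mul_one, hf]
  calc (psi φ f).left * actHom g (ofAdd v) * actHom g (actHom g⁻¹ (psi φ f).left⁻¹)
      = (psi φ f).left * actHom g (ofAdd v) * (psi φ f).left⁻¹ := by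
        rw [← MulAut.mul_apply, ← map_mul, mul_inv_cancel, map_one, MulAut.one_apply]
  _ = actHom g (ofAdd v) * ((psi φ f).left * (psi φ f).left⁻¹) := by
        rw [hco ((psi φ f).left) (actHom g (ofAdd v)), mul_assoc]
  _ = ofAdd (actFun g v) := by rw [mul_inv_cancel, mul_one, actHom_apply]; simp

lemma single_smul_eq_actFun (g : G) (v : VV G d) :
    (MonoidAlgebra.single g (1 : ZMod 2) : AA G) • v = actFun g v := by
  funext i
  rw [Pi.smul_apply, smul_eq_mul, actFun, MonoidAlgebra.of_apply]

lemma single_smul_mem_Pset (hφ : Function.Surjective φ) (g : G) (c : ZMod 2) {v : VV G d}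
    (hv : v ∈ Pset φ) : (MonoidAlgebra.single g c : AA G) • v ∈ Pset φ := by
  have hc2 : c = 0 ∨ c = 1 := by revert c; decide
  rcases hc2 with rfl | rfl
  · have : (MonoidAlgebra.single g (0 : ZMod 2) : AA G) = 0 := MonoidAlgebra.single_zero g
    rw [this, zero_smul]
    exact zero_mem_Pset φ
  · rw [single_smul_eq_actFun]
    exact conj_mem_Pset φ hφ g hv

/-- `Pset` as a submodule over the group algebra. -/
noncomputable def SubP (hφ : Function.Surjective φ) : Submodule (AA G) (VV G d) where
  carrier := Pset φ
  zero_mem' := zero_mem_Pset φ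
  add_mem' := add_mem_Pset φ
  smul_mem' := by
    intro a v hv
    have ha : a = ∑ g ∈ a.coeff.support, (MonoidAlgebra.single g (a.coeff g) : AA G) := by
      exact (MonoidAlgebra.sum_coeff_single a).symm
    have hsum : a • v = ∑ g ∈ a.coeff.support, (MonoidAlgebra.single g (a.coeff g) : AA G) • v := by
      rw [← Finset.sum_smul, ← ha]
    show a • v ∈ Pset φ
    rw [hsum]
    exact AddSubgroup.sum_mem (PsetAdd φ) fun g _ => single_smul_mem_Pset φ hφ g (a.coeff g) hv

variable (hφ : Function.Surjective φ)

noncomputable def delta (g : G) : VV G d ⧸ SubP φ hφ :=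
  Submodule.Quotient.mk (toAdd ((psi φ (Function.surjInv hφ g)).left))

lemma mk_left_eq (f : FreeGroup (Fin d)) :
    (Submodule.Quotient.mk (toAdd ((psi φ f).left)) : VV G d ⧸ SubP φ hφ) = delta φ hφ (φ f) := by
  set f₀ := Function.surjInv hφ (φ f) with hf₀
  have hφf₀ : φ f₀ = φ f := Function.surjInv_eq hφ (φ f)
  have hr : f₀⁻¹ * f ∈ φ.ker := by
    rw [MonoidHom.mem_ker, map_mul, map_inv, hφf₀, inv_mul_cancel]
  have hsplit : f = f₀ * (f₀⁻¹ * f) := by group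
  have hleft : (psi φ f).left = (psi φ f₀).left * actHom (φ f₀) ((psi φ (f₀⁻¹ * f)).left) := by
    conv_lhs => rw [hsplit]
    rw [map_mul, SemidirectProduct.mul_left, psi_right]
  rw [hleft]
  have hmem : actFun (φ f₀) (toAdd ((psi φ (f₀⁻¹ * f)).left)) ∈ SubP φ hφ :=
    conj_mem_Pset φ hφ _ ⟨f₀⁻¹ * f, hr, rfl⟩
  rw [show toAdd ((psi φ f₀).left * actHom (φ f₀) ((psi φ (f₀⁻¹ * f)).left))
      = toAdd ((psi φ f₀).left) + actFun (φ f₀) (toAdd ((psi φ (f₀⁻¹ * f)).left)) from rfl]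
  rw [Submodule.Quotient.mk_add, (Submodule.Quotient.mk_eq_zero _).mpr hmem, add_zero]
  rfl


noncomputable def alphaHom : VV G d →+ AA G where
  toFun v := ∑ i, v i * (of (ZMod 2) G (φ (FreeGroup.of i)) - 1)
  map_zero' := by simp
  map_add' v w := by
    rw [← Finset.sum_add_distrib]
    exact Finset.sum_congr rfl fun i _ => by rw [Pi.add_apply, add_mul]

lemma alphaHom_apply (v : VV G d) :
    alphaHom φ v = ∑ i, v i * (of (ZMod 2) G (φ (FreeGroup.of i)) - 1) := rfl

lemma alphaHom_actFun (g : G) (v : VV G d) :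
    alphaHom φ (actFun g v) = of (ZMod 2) G g * alphaHom φ v := by
  rw [alphaHom_apply, alphaHom_apply, Finset.mul_sum]
  exact Finset.sum_congr rfl fun i _ => by rw [actFun, mul_assoc]

lemma alphaHom_single (i : Fin d) (a : AA G) :
    alphaHom φ (Pi.single i a) = a * (of (ZMod 2) G (φ (FreeGroup.of i)) - 1) := by
  rw [alphaHom_apply, Finset.sum_eq_single i]
  · rw [Pi.single_eq_same]
  · intro j _ hj
    rw [Pi.single_eq_of_ne hj, zero_mul]
  · intro h
    exact absurd (Finset.mem_univ i) h

lemma alpha_psi (f : FreeGroup (Fin d)) :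
    alphaHom φ (toAdd ((psi φ f).left)) = of (ZMod 2) G (φ f) - 1 := by
  induction f using FreeGroup.induction_on with
  | C1 => simp [map_one]
  | of i =>
    have hpure : (pure i : FreeGroup (Fin d)) = FreeGroup.of i := rfl
    rw [psi_of]
    show alphaHom φ (Pi.single i 1) = _
    rw [alphaHom_single, one_mul]
  | inv_of i ih =>
    have hpure : (pure i : FreeGroup (Fin d)) = FreeGroup.of i := rfl
    rw [MonoidHom.map_inv (psi φ), SemidirectProduct.inv_left, psi_right]
    have : toAdd (actHom (φ (FreeGroup.of i))⁻¹ ((psi φ (FreeGroup.of i)).left)⁻¹)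
        = actFun (φ (FreeGroup.of i))⁻¹ (-(toAdd ((psi φ (FreeGroup.of i)).left))) := rfl
    rw [this, alphaHom_actFun, map_neg, ih]
    rw [MonoidHom.map_inv φ, neg_sub, mul_sub, mul_one,
      ← MonoidHom.map_mul (of (ZMod 2) G), inv_mul_cancel, map_one]
  | mul u w hu hw =>
    have : toAdd ((psi φ (u * w)).left)
        = toAdd ((psi φ u).left) + actFun (φ u) (toAdd ((psi φ w).left)) := by
      rw [map_mul, SemidirectProduct.mul_left, psi_right]
      rfl
    rw [this, map_add, alphaHom_actFun, hu, hw, MonoidHom.map_mul φ,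
      MonoidHom.map_mul (of (ZMod 2) G)]
    noncomm_ring

noncomputable def augA (G : Type*) [Group G] : AA G →ₐ[ZMod 2] ZMod 2 :=
  MonoidAlgebra.lift (ZMod 2) (ZMod 2) G 1

lemma augA_of (g : G) : augA G (of (ZMod 2) G g) = 1 := by
  rw [augA, MonoidAlgebra.lift_of]
  rfl

lemma augA_alphaHom (v : VV G d) : augA G (alphaHom φ v) = 0 := by
  show augA G (∑ i, v i * (of (ZMod 2) G (φ (FreeGroup.of i)) - 1)) = 0
  rw [map_sum]
  refine Finset.sum_eq_zero fun i _ => ?_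
  rw [map_mul, map_sub, map_one, augA_of, sub_self, mul_zero]

lemma augA_surjective : Function.Surjective (augA G) := by
  intro c
  refine ⟨MonoidAlgebra.single 1 c, ?_⟩
  rw [augA, MonoidAlgebra.lift_single]
  show c • (1 : ZMod 2) = c
  rw [smul_eq_mul, mul_one]

noncomputable def betaHom : AA G →+ (VV G d ⧸ SubP φ hφ) :=
  (Finsupp.liftAddHom fun g =>
    { toFun := fun c => c • delta φ hφ g
      map_zero' := zero_smul _ _
      map_add' := fun c c' => add_smul c c' _ }).comp
    (MonoidAlgebra.coeffAddEquiv (R := ZMod 2) (M := G)).toAddMonoidHom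

lemma betaHom_single (g : G) (c : ZMod 2) :
    betaHom φ hφ (MonoidAlgebra.single g c) = c • delta φ hφ g :=
  Finsupp.liftAddHom_apply_single _ _ _

lemma beta_alpha_single (i : Fin d) (g : G) (c : ZMod 2) :
    betaHom φ hφ (alphaHom φ (Pi.single i (MonoidAlgebra.single g c)))
      = Submodule.Quotient.mk (Pi.single i (MonoidAlgebra.single g c)) := by
  rw [alphaHom_single]
  have hexp : (MonoidAlgebra.single g c : AA G) * (of (ZMod 2) G (φ (FreeGroup.of i)) - 1)
      = MonoidAlgebra.single (g * φ (FreeGroup.of i)) c - MonoidAlgebra.single g c := by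
    rw [mul_sub, mul_one, MonoidAlgebra.of_apply, MonoidAlgebra.single_mul_single, mul_one]
  rw [hexp, map_sub, betaHom_single, betaHom_single]
  have hdelta : delta φ hφ (g * φ (FreeGroup.of i))
      = delta φ hφ g + Submodule.Quotient.mk (Pi.single i (MonoidAlgebra.single g 1)) := by
    have h1 : φ (Function.surjInv hφ g * FreeGroup.of i) = g * φ (FreeGroup.of i) := by
      rw [map_mul, Function.surjInv_eq hφ]
    have h2 := mk_left_eq φ hφ (Function.surjInv hφ g * FreeGroup.of i)
    rw [h1] at h2
    rw [← h2]
    have h3 : (psi φ (Function.surjInv hφ g * FreeGroup.of i)).left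
        = (psi φ (Function.surjInv hφ g)).left * actHom g (ofAdd (Pi.single i 1)) := by
      rw [map_mul, SemidirectProduct.mul_left, psi_right, Function.surjInv_eq hφ, psi_of]
    rw [h3]
    rw [show toAdd ((psi φ (Function.surjInv hφ g)).left * actHom g (ofAdd (Pi.single i 1)))
        = toAdd ((psi φ (Function.surjInv hφ g)).left) + actFun g (Pi.single i 1) from rfl]
    rw [Submodule.Quotient.mk_add]
    congr 1
    have h4 : actFun g (Pi.single i (1 : AA G)) = Pi.single i (MonoidAlgebra.single g 1) := by
      funext j
      by_cases hj : j = i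
      · subst hj
        rw [actFun, Pi.single_eq_same, Pi.single_eq_same, mul_one, MonoidAlgebra.of_apply]
      · rw [actFun, Pi.single_eq_of_ne hj, Pi.single_eq_of_ne hj, mul_zero]
    rw [h4]
  rw [hdelta, smul_add, add_sub_cancel_left, ← Submodule.Quotient.mk_smul]
  congr 1
  funext j
  by_cases hj : j = i
  · subst hj
    rw [Pi.smul_apply, Pi.single_eq_same, Pi.single_eq_same, MonoidAlgebra.smul_single, smul_eq_mul,
      mul_one]
  · rw [Pi.smul_apply, Pi.single_eq_of_ne hj, Pi.single_eq_of_ne hj, smul_zero]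

lemma beta_alpha (v : VV G d) :
    betaHom φ hφ (alphaHom φ v) = Submodule.Quotient.mk v := by
  have hi : ∀ i : Fin d,
      ((betaHom φ hφ).comp (alphaHom φ)).comp (AddMonoidHom.single (fun _ : Fin d => AA G) i)
        = ((SubP φ hφ).mkQ.toAddMonoidHom).comp
            (AddMonoidHom.single (fun _ : Fin d => AA G) i) := by
    intro i
    apply MonoidAlgebra.addMonoidHom_ext
    intro g c
    simpa using beta_alpha_single φ hφ i g c
  have h : (betaHom φ hφ).comp (alphaHom φ) = (SubP φ hφ).mkQ.toAddMonoidHom :=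
    AddMonoidHom.functions_ext _ _ _ fun i x => DFunLike.congr_fun (hi i) x
  exact DFunLike.congr_fun h v

lemma ker_sub {v : VV G d} (hv : alphaHom φ v = 0) : v ∈ SubP φ hφ := by
  have h := beta_alpha φ hφ v
  rw [hv, map_zero] at h
  exact (Submodule.Quotient.mk_eq_zero (SubP φ hφ)).mp h.symm


lemma add_self_VV (w : VV G d) : w + w = 0 := by
  have h : w + w = (1 + 1 : ZMod 2) • w := by
    rw [add_smul, one_smul]
  rw [h, show (1 + 1 : ZMod 2) = 0 by decide, zero_smul]

section WLemmas

lemma commute_of_right_one {u v : Multiplicative (VV G d) ⋊[actHom] G}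
    (hu : u.right = 1) (hv : v.right = 1) : u * v = v * u := by
  ext
  · rw [SemidirectProduct.mul_left, SemidirectProduct.mul_left, hu, hv, map_one,
      MulAut.one_apply, MulAut.one_apply, mul_comm]
  · rw [SemidirectProduct.mul_right, SemidirectProduct.mul_right, hu, hv]

lemma sq_eq_one_of_right_one {u : Multiplicative (VV G d) ⋊[actHom] G}
    (hu : u.right = 1) : u ^ 2 = 1 := by
  rw [pow_two]
  ext
  · rw [SemidirectProduct.mul_left, hu, map_one, MulAut.one_apply, SemidirectProduct.one_left]
    have : u.left * u.left = ofAdd (toAdd u.left + toAdd u.left) := rfl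
    rw [this, add_self_VV]
    rfl
  · rw [SemidirectProduct.mul_right, hu, mul_one, SemidirectProduct.one_right]

end WLemmas

section Card

variable [Finite G]

instance : Finite (AA G) :=
  Finite.of_equiv (G → ZMod 2) (MonoidAlgebra.coeffEquiv.trans (Finsupp.equivFunOnFinite (α := G) (M := ZMod 2))).symm

instance : Finite (Multiplicative (VV G d) ⋊[actHom] G) :=
  Finite.of_injective
    (fun u : Multiplicative (VV G d) ⋊[actHom] G => (u.left, u.right))
    (fun u v huv => by
      ext : 1
      · exact congrArg Prod.fst huv
      · exact congrArg Prod.snd huv)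

lemma card_AA : Nat.card (AA G) = 2 ^ Nat.card G := by
  have e : AA G ≃ (G → ZMod 2) := MonoidAlgebra.coeffEquiv.trans Finsupp.equivFunOnFinite
  rw [Nat.card_congr e, Nat.card_fun, Nat.card_zmod]

lemma card_VV : Nat.card (VV G d) = 2 ^ (d * Nat.card G) := by
  have hfin : Nat.card (Fin d) = d := by simp
  rw [Nat.card_fun, card_AA, hfin, ← pow_mul, mul_comm]

lemma card_Pset_lower (hφ : Function.Surjective φ) :
    2 ^ (d * Nat.card G + 1) ≤ Nat.card (Pset φ) * 2 ^ Nat.card G := by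
  classical
  set K := (alphaHom φ).ker with hK
  have e1 : Nat.card (VV G d) = Nat.card (VV G d ⧸ K) * Nat.card K :=
    AddSubgroup.card_eq_card_quotient_mul_card_addSubgroup K
  have e2 : Nat.card (VV G d ⧸ K) = Nat.card (alphaHom φ).range :=
    Nat.card_congr (QuotientAddGroup.quotientKerEquivRange (alphaHom φ)).toEquiv
  let augH : AA G →+ ZMod 2 := AddMonoidHom.mk' (fun a => augA G a) (fun a b => map_add _ a b)
  have hrange : (alphaHom φ).range ≤ augH.ker := by
    rintro y ⟨v, rfl⟩
    show augA G (alphaHom φ v) = 0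
    exact augA_alphaHom φ v
  have e3 : Nat.card (alphaHom φ).range ≤ Nat.card augH.ker :=
    AddSubgroup.card_le_of_le hrange
  have e4 : Nat.card (AA G) = Nat.card (AA G ⧸ augH.ker) * Nat.card augH.ker :=
    AddSubgroup.card_eq_card_quotient_mul_card_addSubgroup augH.ker
  have haugsurj : Function.Surjective augH := fun c => augA_surjective c
  have e5 : Nat.card (AA G ⧸ augH.ker) = 2 := by
    rw [Nat.card_congr (QuotientAddGroup.quotientKerEquivOfSurjective augH haugsurj).toEquiv,
      Nat.card_zmod]
  have hsub : ((K : Set (VV G d))) ⊆ Pset φ := fun v hv => ker_sub φ hφ hv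
  have hKP : Nat.card K ≤ Nat.card (Pset φ) :=
    Nat.card_mono (Set.toFinite (Pset φ)) hsub
  have h1 : 2 ^ (d * Nat.card G) = Nat.card (alphaHom φ).range * Nat.card K := by
    rw [← card_VV (G := G) (d := d), e1, e2]
  have h2 : 2 ^ Nat.card G = 2 * Nat.card augH.ker := by
    rw [← card_AA (G := G), e4, e5]
  calc 2 ^ (d * Nat.card G + 1) = 2 * (Nat.card (alphaHom φ).range * Nat.card K) := by
        rw [← h1, pow_succ, mul_comm]
  _ ≤ 2 * (Nat.card augH.ker * Nat.card (Pset φ)) := by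
        exact Nat.mul_le_mul_left 2 (Nat.mul_le_mul e3 hKP)
  _ = Nat.card (Pset φ) * 2 ^ Nat.card G := by
        rw [h2]; ring

end Card


end RelModFaithful

open RelModFaithful
open scoped commutatorElement

/-- If `G` is a finite non-cyclic group and `1 → R → F → G → 1` is a free
presentation with `F` free of finite rank `d ≥ 2`, then `G` acts faithfully on the relation
module `R/[R,R]`: every element of `F` mapping to a nontrivial element of `G` moves some
element of `R` modulo `[R,R]`. -/
theorem relation_module_action_faithful
    {G : Type*} [Group G] [Finite G] (hG : ¬ IsCyclic G)
    {d : ℕ} (hd : 2 ≤ d)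
    (φ : FreeGroup (Fin d) →* G) (hφ : Function.Surjective φ)
    (x : FreeGroup (Fin d)) (hx : φ x ≠ 1) :
    ∃ r ∈ φ.ker,
      x * r * x⁻¹ * r⁻¹ ∉ (⁅φ.ker, φ.ker⁆ : Subgroup (FreeGroup (Fin d))) := by
  classical
  by_contra hcon
  push_neg at hcon
  -- ⁅ker, ker⁆ is killed by ψ
  have hcommker : (⁅φ.ker, φ.ker⁆ : Subgroup (FreeGroup (Fin d))) ≤ (psi φ).ker := by
    rw [Subgroup.commutator_le]
    intro r hr s hs
    have hc : psi φ r * psi φ s = psi φ s * psi φ r :=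
      commute_of_right_one (by rw [psi_right]; exact hr) (by rw [psi_right]; exact hs)
    show psi φ ⁅r, s⁆ = 1
    rw [commutatorElement_def, map_mul, map_mul, map_mul, map_inv, map_inv, hc]
    group
  -- psi φ x commutes with psi φ r for r in the kernel
  have hpsix_comm : ∀ r ∈ φ.ker, Commute (psi φ x) (psi φ r) := by
    intro r hr
    have h1 : psi φ (x * r * x⁻¹ * r⁻¹) = 1 := hcommker (hcon r hr)
    have h2 : (⁅psi φ x, psi φ r⁆ : Multiplicative (VV G d) ⋊[actHom] G) = 1 := by
      rw [commutatorElement_def, ← map_inv, ← map_inv, ← map_mul, ← map_mul, ← map_mul]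
      exact h1
    exact commutatorElement_eq_one_iff_commute.mp h2
  set HH : Subgroup (FreeGroup (Fin d)) := φ.ker ⊔ Subgroup.closure {x} with hHHdef
  set A : Subgroup (Multiplicative (VV G d) ⋊[actHom] G) := Subgroup.map (psi φ) HH with hAdef
  -- A is generated by a commuting set
  have hHHclosure : HH = Subgroup.closure ((φ.ker : Set (FreeGroup (Fin d))) ∪ {x}) := by
    rw [Subgroup.closure_union, Subgroup.closure_eq]
  have hAclosure : A = Subgroup.closure ((⇑(psi φ)) '' ((φ.ker : Set (FreeGroup (Fin d))) ∪ {x})) := by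
    rw [hAdef, hHHclosure, MonoidHom.map_closure]
  have hgen : ∀ a ∈ (⇑(psi φ)) '' ((φ.ker : Set (FreeGroup (Fin d))) ∪ {x}), ∀ b ∈ (⇑(psi φ)) '' ((φ.ker : Set (FreeGroup (Fin d))) ∪ {x}),
      Commute a b := by
    rintro _ ⟨f1, hf1, rfl⟩ _ ⟨f2, hf2, rfl⟩
    rcases hf1 with hf1 | hf1 <;> rcases hf2 with hf2 | hf2
    · exact commute_of_right_one (by rw [psi_right]; exact hf1)
        (by rw [psi_right]; exact hf2)
    · rw [Set.mem_singleton_iff] at hf2; subst hf2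
      exact (hpsix_comm f1 hf1).symm
    · rw [Set.mem_singleton_iff] at hf1; subst hf1
      exact hpsix_comm f2 hf2
    · rw [Set.mem_singleton_iff] at hf1 hf2; subst hf1; subst hf2
      exact Commute.refl _
  have hA_comm : ∀ a ∈ A, ∀ b ∈ A, a * b = b * a := by
    intro a ha b hb
    rw [hAclosure] at ha hb
    refine Subgroup.closure_induction₂
      (p := fun u v _ _ => Commute u v) (fun u v hu hv => hgen u hu v hv)
      (fun u _ => Commute.one_left u) (fun u _ => Commute.one_right u)
      (fun u v w _ _ _ h1 h2 => h1.mul_left h2)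
      (fun u v w _ _ _ h1 h2 => h1.mul_right h2)
      (fun u v _ _ h => h.inv_left)
      (fun u v _ _ h => h.inv_right) ha hb
  letI cA : CommGroup ↥A :=
    { (inferInstance : Group ↥A) with
      mul_comm := fun a b => Subtype.ext (hA_comm a.1 a.2 b.1 b.2) }
  set Esub : Subgroup (Multiplicative (VV G d) ⋊[actHom] G) := Subgroup.map (psi φ) φ.ker with hEdef
  have hEA : Esub ≤ A := Subgroup.map_mono le_sup_left
  -- every element of Esub squares to 1
  have hE2 : ∀ e ∈ Esub, e ^ 2 = 1 := by
    rintro _ ⟨r, hr, rfl⟩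
    exact sq_eq_one_of_right_one (by rw [psi_right]; exact hr)
  set π : ↥A →* ↥A := powMonoidHom 2 with hπdef
  -- injection from Esub into ker π
  have hEπ : Nat.card Esub ≤ Nat.card π.ker := by
    refine Nat.card_le_card_of_injective
      (fun e => (⟨⟨e.1, hEA e.2⟩, ?_⟩ : ↥π.ker)) ?_
    · have : (⟨e.1, hEA e.2⟩ : ↥A) ^ 2 = 1 := by
        have h1 : e.1 ^ 2 = 1 := hE2 e.1 e.2
        refine Subtype.ext ?_
        rw [SubgroupClass.coe_pow, OneMemClass.coe_one]
        exact h1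
      exact this
    · intro e e' h
      have h2 : (e.1 : Multiplicative (VV G d) ⋊[actHom] G)
          = (e'.1 : Multiplicative (VV G d) ⋊[actHom] G) :=
        congrArg (fun z : ↥π.ker => ((z.1 : ↥A) : Multiplicative (VV G d) ⋊[actHom] G)) h
      exact Subtype.ext h2
  -- card of ker π equals card of the quotient by range π
  have c1 : Nat.card ↥A = Nat.card (↥A ⧸ π.ker) * Nat.card π.ker :=
    Subgroup.card_eq_card_quotient_mul_card_subgroup π.ker
  have c2 : Nat.card (↥A ⧸ π.ker) = Nat.card π.range :=
    Nat.card_congr (QuotientGroup.quotientKerEquivRange π).toEquiv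
  have c3 : Nat.card ↥A = Nat.card (↥A ⧸ π.range) * Nat.card π.range :=
    Subgroup.card_eq_card_quotient_mul_card_subgroup π.range
  letI : Nonempty π.range := ⟨1⟩
  have hrangepos : 0 < Nat.card π.range := Nat.card_pos
  have hkerq : Nat.card π.ker = Nat.card (↥A ⧸ π.range) := by
    have h := c1
    rw [c2] at h
    have h' : Nat.card π.range * Nat.card π.ker
        = Nat.card (↥A ⧸ π.range) * Nat.card π.range := by
      rw [← h, ← c3]
    rw [mul_comm] at h'
    exact Nat.eq_of_mul_eq_mul_right hrangepos h'
  -- the quotient has exponent 2 and bounded rank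
  haveI : φ.ker.FiniteIndex := by
    constructor
    rw [Subgroup.index_ker, MonoidHom.range_eq_top_of_surjective φ hφ, Subgroup.card_top]
    exact Nat.card_pos.ne'
  haveI : HH.FiniteIndex := Subgroup.finiteIndex_of_le le_sup_left
  set S : Finset (FreeGroup (Fin d)) := Finset.univ.image FreeGroup.of with hSdef
  have hS : Subgroup.closure (S : Set (FreeGroup (Fin d))) = ⊤ := by
    rw [hSdef, Finset.coe_image, Finset.coe_univ, Set.image_univ]
    exact FreeGroup.closure_range_of (Fin d)
  have hScard : S.card ≤ d := by
    refine Finset.card_image_le.trans ?_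
    simp
  obtain ⟨T, hTcard, hTtop⟩ := Subgroup.exists_finset_card_le_mul HH hS
  -- homomorphism from HH onto A
  have hmemA : ∀ h : ↥HH, psi φ h.1 ∈ A := fun h => ⟨h.1, h.2, rfl⟩
  set θ : ↥HH →* ↥A := ((psi φ).comp HH.subtype).codRestrict A (fun h => hmemA h) with hθdef
  have hθsurj : Function.Surjective θ := by
    rintro ⟨a, f, hf, rfl⟩
    exact ⟨⟨f, hf⟩, rfl⟩
  set ρ : ↥HH →* ↥A ⧸ π.range := (QuotientGroup.mk' π.range).comp θ with hρdef
  have hρsurj : Function.Surjective ρ :=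
    (QuotientGroup.mk'_surjective π.range).comp hθsurj
  have hQgen : Subgroup.closure ((T.image ρ : Finset (↥A ⧸ π.range)) : Set (↥A ⧸ π.range)) = ⊤ := by
    rw [Finset.coe_image, ← MonoidHom.map_closure, hTtop]
    exact Subgroup.map_top_of_surjective ρ hρsurj
  have hrankQ : Group.rank (↥A ⧸ π.range) ≤ HH.index * d := by
    refine (Group.rank_le hQgen).trans ?_
    refine Finset.card_image_le.trans (hTcard.trans ?_)
    exact Nat.mul_le_mul_left _ hScard
  have hexpQ : ∀ q : ↥A ⧸ π.range, q ^ 2 = 1 := by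
    intro q
    induction q using QuotientGroup.induction_on with
    | H a =>
      have hmem : (a : ↥A) ^ 2 ∈ π.range := ⟨a, rfl⟩
      have hrw : ((a : ↥A ⧸ π.range)) ^ 2 = ((((a : ↥A) ^ 2 : ↥A)) : ↥A ⧸ π.range) := rfl
      rw [hrw, QuotientGroup.eq_one_iff]
      exact hmem
  have hdvd : Nat.card (↥A ⧸ π.range) ∣ 2 ^ Group.rank (↥A ⧸ π.range) :=
    card_dvd_exponent_pow_rank' _ hexpQ
  have hcardQ : Nat.card (↥A ⧸ π.range) ≤ 2 ^ (HH.index * d) := by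
    refine (Nat.le_of_dvd (pow_pos (by norm_num) _) hdvd).trans ?_
    exact Nat.pow_le_pow_right (by norm_num) hrankQ
  -- card of Pset = card of Esub
  have hEP : Pset φ = (fun u : Multiplicative (VV G d) ⋊[actHom] G => toAdd u.left) ''
      ((Esub : Set (Multiplicative (VV G d) ⋊[actHom] G))) := by
    ext v
    constructor
    · rintro ⟨r, hr, hl⟩
      refine ⟨psi φ r, ⟨r, hr, rfl⟩, ?_⟩
      show toAdd ((psi φ r).left) = v
      rw [hl, toAdd_ofAdd]
    · rintro ⟨u, ⟨r, hr, rfl⟩, rfl⟩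
      exact ⟨r, hr, rfl⟩
  have hinjE : Set.InjOn (fun u : Multiplicative (VV G d) ⋊[actHom] G => toAdd u.left)
      ((Esub : Set (Multiplicative (VV G d) ⋊[actHom] G))) := by
    rintro u hu u' hu' huv
    obtain ⟨r, hr, rfl⟩ := hu
    obtain ⟨r', hr', rfl⟩ := hu'
    ext : 1
    · exact congrArg ofAdd huv
    · rw [psi_right, psi_right]
      rw [MonoidHom.mem_ker.mp hr, MonoidHom.mem_ker.mp hr']
  have hPE : Nat.card (Pset φ) = Nat.card Esub := by
    rw [hEP, Nat.card_image_of_injOn hinjE]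
    rfl
  -- index bookkeeping
  have hkerindex : φ.ker.index = Nat.card G := by
    rw [Subgroup.index_ker, MonoidHom.range_eq_top_of_surjective φ hφ, Subgroup.card_top]
  have hnm : φ.ker.relIndex HH * HH.index = Nat.card G := by
    rw [Subgroup.relIndex_mul_index le_sup_left, hkerindex]
  have hxHH : x ∈ HH := Subgroup.mem_sup_right (Subgroup.subset_closure rfl)
  have hn1 : φ.ker.relIndex HH ≠ 1 := by
    intro h
    exact hx (MonoidHom.mem_ker.mp (Subgroup.relIndex_eq_one.mp h hxHH))
  have hm0 : HH.index ≠ 0 := Subgroup.FiniteIndex.index_ne_zero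
  have hcG0 : Nat.card G ≠ 0 := Nat.card_pos.ne'
  have hn0 : φ.ker.relIndex HH ≠ 0 := by
    intro h
    rw [h, zero_mul] at hnm
    exact hcG0 hnm.symm
  -- final numerical contradiction
  have hlower := card_Pset_lower φ hφ
  have hupper : Nat.card (Pset φ) ≤ 2 ^ (HH.index * d) := by
    rw [hPE]
    exact (hEπ.trans (le_of_eq hkerq)).trans hcardQ
  have hchain : 2 ^ (d * Nat.card G + 1) ≤ 2 ^ (HH.index * d + Nat.card G) := by
    refine hlower.trans ?_
    rw [pow_add]
    exact Nat.mul_le_mul_right _ hupper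
  have hexp : d * Nat.card G + 1 ≤ HH.index * d + Nat.card G :=
    (Nat.pow_le_pow_iff_right (by norm_num : 1 < 2)).mp hchain
  -- substitute n * m = card G
  set n := φ.ker.relIndex HH with hndef
  set m := HH.index with hmdef
  rw [← hnm] at hexp
  have hn2 : 2 ≤ n := by omega
  have hm1 : 1 ≤ m := by omega
  obtain ⟨d', rfl⟩ : ∃ d', d = 2 + d' := ⟨d - 2, by omega⟩
  obtain ⟨n', hn'⟩ : ∃ n', n = 2 + n' := ⟨n - 2, by omega⟩
  obtain ⟨m', hm'⟩ : ∃ m', m = 1 + m' := ⟨m - 1, by omega⟩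
  rw [hn', hm'] at hexp
  have hexpand : (2 + d') * ((2 + n') * (1 + m')) + 1
      = ((1 + m') * (2 + d') + (2 + n') * (1 + m'))
        + (1 + (n' + d' + d' * n' + n' * m' + d' * m' + d' * n' * m')) := by
    ring
  rw [hexpand] at hexp
  have h0 : (1 + (n' + d' + d' * n' + n' * m' + d' * m' + d' * n' * m'))
      ≤ 0 := by
    have := Nat.le_of_add_le_add_left
      (a := (1 + m') * (2 + d') + (2 + n') * (1 + m'))
      (b := 1 + (n' + d' + d' * n' + n' * m' + d' * m' + d' * n' * m')) (c := 0)
      (by simpa using hexp)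
    exact this
  exact absurd h0 (by simp)
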